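/- Let C ⊆ ℝ be a closed set, let (W_n) be a sequence of P-variables such that W_n takes values in C almost everywhere for every n, and let W be a P-variable with d_M(W_n, W) → 0 as n → ∞. Then W takes values in C almost everywhere. -/

import Mathlib

set_option autoImplicit false

open MeasureTheory Set
open scoped ENNReal NNReal

noncomputable section

/-- `ℝ^n` with the Euclidean metric. -/
abbrev RE (n : ℕ) : Type := EuclideanSpace ℝ (Fin n)

/-- The random vector `(f₁(x₁), f₁(x₂), …, f_k(x₁), f_k(x₂), W(x₁,x₂,x₁₂))`. -/
def sVec {Ω₁ Ω₂ : Type*} (k : ℕ) (f : Fin k → Ω₁ → ℝ)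
    (W : Ω₁ × Ω₁ × Ω₂ → ℝ) (x : Ω₁ × Ω₁ × Ω₂) : RE (2 * k + 1) :=
  (WithLp.equiv 2 (Fin (2 * k + 1) → ℝ)).symm fun i =>
    if _ : (i : ℕ) < 2 * k then
      if (i : ℕ) % 2 = 0 then f ⟨(i : ℕ) / 2, by omega⟩ x.1
      else f ⟨(i : ℕ) / 2, by omega⟩ x.2.1
    else W x

/-- `S(f₁,…,f_k,W)`: the pushforward of the product measure `P₁ ⊗ P₁ ⊗ P₂` under `sVec`. -/
def Smeasure {Ω₁ Ω₂ : Type*} [MeasurableSpace Ω₁] [MeasurableSpace Ω₂]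
    (P₁ : Measure Ω₁) (P₂ : Measure Ω₂) {k : ℕ} (f : Fin k → Ω₁ → ℝ)
    (W : Ω₁ × Ω₁ × Ω₂ → ℝ) : Measure (RE (2 * k + 1)) :=
  (P₁.prod (P₁.prod P₂)).map (sVec k f W)

/-- The `k`-profile `S_k(W)`. -/
def SkSet {Ω₁ Ω₂ : Type*} [MeasurableSpace Ω₁] [MeasurableSpace Ω₂]
    (P₁ : Measure Ω₁) (P₂ : Measure Ω₂) (k : ℕ)
    (W : Ω₁ × Ω₁ × Ω₂ → ℝ) : Set (Measure (RE (2 * k + 1))) :=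
  {μ | ∃ f : Fin k → Ω₁ → ℝ, (∀ i, Measurable (f i)) ∧
    (∀ i x, f i x ∈ Icc (-1 : ℝ) 1) ∧ μ = Smeasure P₁ P₂ f W}

/-- A function partition: `{0,1}`-valued measurable functions summing to `1`. -/
def IsFunctionPartition {Ω₁ : Type*} [MeasurableSpace Ω₁] {k : ℕ}
    (f : Fin k → Ω₁ → ℝ) : Prop :=
  (∀ i, Measurable (f i)) ∧ (∀ i x, f i x = 0 ∨ f i x = 1) ∧ ∀ x, ∑ i, f i x = 1

/-- The restricted `k`-profile `S'_k(W)`. -/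
def SkSet' {Ω₁ Ω₂ : Type*} [MeasurableSpace Ω₁] [MeasurableSpace Ω₂]
    (P₁ : Measure Ω₁) (P₂ : Measure Ω₂) (k : ℕ)
    (W : Ω₁ × Ω₁ × Ω₂ → ℝ) : Set (Measure (RE (2 * k + 1))) :=
  {μ | ∃ f : Fin k → Ω₁ → ℝ, IsFunctionPartition f ∧ μ = Smeasure P₁ P₂ f W}

/-- Hausdorff edistance (w.r.t. the Lévy–Prokhorov distance) between sets of measures. -/
def eHausLP {X : Type*} [MeasurableSpace X] [PseudoEMetricSpace X]
    (A B : Set (Measure X)) : ℝ≥0∞ :=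
  max (⨆ μ ∈ A, ⨅ ν ∈ B, levyProkhorovEDist μ ν)
      (⨆ ν ∈ B, ⨅ μ ∈ A, levyProkhorovEDist μ ν)

/-- Hausdorff distance (w.r.t. the Lévy–Prokhorov distance) between sets of measures. -/
def dHLP {X : Type*} [MeasurableSpace X] [PseudoEMetricSpace X]
    (A B : Set (Measure X)) : ℝ := (eHausLP A B).toReal

/-- A `P`-variable: a measurable real-valued function on a product `Ω₁ × Ω₁ × Ω₂`
of probability spaces. -/
structure PVar where
  (Ω₁ : Type*)
  (Ω₂ : Type*)
  [m₁ : MeasurableSpace Ω₁]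
  [m₂ : MeasurableSpace Ω₂]
  (P₁ : Measure Ω₁)
  (P₂ : Measure Ω₂)
  (prob₁ : IsProbabilityMeasure P₁)
  (prob₂ : IsProbabilityMeasure P₂)
  (W : Ω₁ × Ω₁ × Ω₂ → ℝ)
  (meas : Measurable W)

attribute [instance] PVar.m₁ PVar.m₂

/-- The underlying product probability measure of a `P`-variable. -/
def PVar.vol (V : PVar) : Measure (V.Ω₁ × V.Ω₁ × V.Ω₂) := V.P₁.prod (V.P₁.prod V.P₂)

/-- The `k`-profile of a `P`-variable. -/
def PVar.Sk (V : PVar) (k : ℕ) : Set (Measure (RE (2 * k + 1))) := SkSet V.P₁ V.P₂ k V.W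

/-- The restricted `k`-profile of a `P`-variable. -/
def PVar.Sk' (V : PVar) (k : ℕ) : Set (Measure (RE (2 * k + 1))) := SkSet' V.P₁ V.P₂ k V.W

/-- The `P`-variables metric `d_M`. -/
def dM (V U : PVar) : ℝ :=
  ∑' k : ℕ, (2 : ℝ)⁻¹ ^ (k + 1) * dHLP (V.Sk (k + 1)) (U.Sk (k + 1))

universe u₁ u₂ u₃ u₄


namespace Statement18Aux

lemma measurable_sVec {Ω₁ Ω₂ : Type*} [MeasurableSpace Ω₁] [MeasurableSpace Ω₂]
    {k : ℕ} {f : Fin k → Ω₁ → ℝ} (hf : ∀ i, Measurable (f i))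
    {W : Ω₁ × Ω₁ × Ω₂ → ℝ} (hW : Measurable W) : Measurable (sVec k f W) := by
  have h : sVec k f W = fun x => (MeasurableEquiv.toLp 2 (Fin (2*k+1) → ℝ))
      (fun i => if _ : (i : ℕ) < 2 * k then
        if (i : ℕ) % 2 = 0 then f ⟨(i:ℕ)/2, by omega⟩ x.1 else f ⟨(i:ℕ)/2, by omega⟩ x.2.1
      else W x) := rfl
  rw [h]
  apply (MeasurableEquiv.toLp 2 _).measurable.comp
  apply measurable_pi_lambda
  intro i
  split_ifs with h1 h2
  · exact (hf _).comp measurable_fst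
  · exact (hf _).comp (measurable_fst.comp measurable_snd)
  · exact hW

lemma sVec_last {Ω₁ Ω₂ : Type*} (f : Fin 1 → Ω₁ → ℝ) (W : Ω₁ × Ω₁ × Ω₂ → ℝ)
    (x : Ω₁ × Ω₁ × Ω₂) : sVec 1 f W x 2 = W x := by
  show (WithLp.equiv 2 (Fin (2*1+1) → ℝ)).symm _ 2 = W x
  rw [WithLp.equiv_symm_apply, PiLp.toLp_apply]
  norm_num

lemma coord_dist_le {n : ℕ} (i : Fin n) (y z : RE n) : dist (y i) (z i) ≤ dist y z := by
  rw [EuclideanSpace.dist_eq]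
  have h1 : dist (y i) (z i) = Real.sqrt (dist (y i) (z i) ^ 2) := by
    rw [Real.sqrt_sq dist_nonneg]
  rw [h1]
  apply Real.sqrt_le_sqrt
  exact Finset.single_le_sum (f := fun j => dist (y j) (z j) ^ 2)
    (fun j _ => sq_nonneg _) (Finset.mem_univ i)

lemma continuous_coord {n : ℕ} (i : Fin n) : Continuous (fun y : RE n => y i) :=
  (continuous_apply i).comp (PiLp.continuous_ofLp 2 _)

lemma smeasure_prob {Ω₁ Ω₂ : Type*} [MeasurableSpace Ω₁] [MeasurableSpace Ω₂]
    (P₁ : Measure Ω₁) (P₂ : Measure Ω₂) [IsProbabilityMeasure P₁] [IsProbabilityMeasure P₂]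
    {k : ℕ} {f : Fin k → Ω₁ → ℝ} (hf : ∀ i, Measurable (f i))
    {W : Ω₁ × Ω₁ × Ω₂ → ℝ} (hW : Measurable W) :
    IsProbabilityMeasure (Smeasure P₁ P₂ f W) :=
  Measure.isProbabilityMeasure_map (measurable_sVec hf hW).aemeasurable

lemma zero_mem_Sk (V : PVar) (k : ℕ) :
    Smeasure V.P₁ V.P₂ (fun (_ : Fin k) (_ : V.Ω₁) => (0:ℝ)) V.W ∈ V.Sk k :=
  ⟨_, fun _ => measurable_const, fun _ _ => by norm_num, rfl⟩

lemma prob_of_mem_Sk (V : PVar) {k : ℕ} {μ : Measure (RE (2*k+1))}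
    (h : μ ∈ V.Sk k) : IsProbabilityMeasure μ := by
  haveI := V.prob₁; haveI := V.prob₂
  obtain ⟨f, hf, -, rfl⟩ := h
  exact smeasure_prob _ _ hf V.meas

lemma eHausLP_Sk_le_one (V U : PVar) (k : ℕ) : eHausLP (V.Sk k) (U.Sk k) ≤ 1 := by
  apply max_le
  · apply iSup₂_le
    intro μ hμ
    have hν₀ := zero_mem_Sk U k
    refine le_trans (iInf₂_le _ hν₀) ?_
    haveI := prob_of_mem_Sk V hμ
    haveI := prob_of_mem_Sk U hν₀
    refine le_trans (levyProkhorovEDist_le_max_measure_univ _ _) ?_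
    simp
  · apply iSup₂_le
    intro ν hν
    have hμ₀ := zero_mem_Sk V k
    refine le_trans (iInf₂_le _ hμ₀) ?_
    haveI := prob_of_mem_Sk U hν
    haveI := prob_of_mem_Sk V hμ₀
    refine le_trans (levyProkhorovEDist_le_max_measure_univ _ _) ?_
    simp

lemma dHLP_Sk_le_one (V U : PVar) (k : ℕ) : dHLP (V.Sk k) (U.Sk k) ≤ 1 := by
  have := ENNReal.toReal_mono (by norm_num : (1:ℝ≥0∞) ≠ ⊤) (eHausLP_Sk_le_one V U k)
  simpa [dHLP] using this

lemma dHLP_nonneg {X : Type*} [MeasurableSpace X] [PseudoEMetricSpace X]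
    (A B : Set (Measure X)) : 0 ≤ dHLP A B := ENNReal.toReal_nonneg

end Statement18Aux

open Statement18Aux in

/-- If `C ⊆ ℝ` is closed, each P-variable `W_n` takes values in `C`
almost everywhere, and `d_M(W_n, W) → 0`, then `W` takes values in `C` almost
everywhere. -/

theorem ae_mem_closed_of_dM_tendsto_zero
    (C : Set ℝ) (hC : IsClosed C)
    (V : ℕ → PVar.{u₁, u₂}) (Vlim : PVar.{u₃, u₄})
    (hvals : ∀ n, (V n).vol {x | (V n).W x ∉ C} = 0)
    (hconv : Filter.Tendsto (fun n => dM (V n) Vlim) Filter.atTop (nhds 0)) :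
    Vlim.vol {x | Vlim.W x ∉ C} = 0 := by
  classical
  haveI := Vlim.prob₁; haveI := Vlim.prob₂
  rcases C.eq_empty_or_nonempty with rfl | hCne
  · exfalso
    haveI := (V 0).prob₁; haveI := (V 0).prob₂
    have h := hvals 0
    simp only [mem_empty_iff_false, not_false_iff, setOf_true] at h
    haveI : IsProbabilityMeasure (V 0).vol := by
      unfold PVar.vol; infer_instance
    rw [measure_univ] at h
    exact one_ne_zero h
  -- the test measure μ ∈ S₁(Vlim), built from the constant-0 test function
  set f0 : Fin 1 → Vlim.Ω₁ → ℝ := fun _ _ => 0 with hf0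
  set μ : Measure (RE (2*1+1)) := Smeasure Vlim.P₁ Vlim.P₂ f0 Vlim.W with hμdef
  have hμmem : μ ∈ Vlim.Sk 1 :=
    ⟨f0, fun _ => measurable_const, fun _ _ => by norm_num [hf0], rfl⟩
  haveI hμprob : IsProbabilityMeasure μ := prob_of_mem_Sk Vlim hμmem
  have hmble : MeasurableSet {y : RE (2*1+1) | y 2 ∉ C} :=
    hC.measurableSet.compl.preimage (continuous_coord 2).measurable
  have hmap : Vlim.vol {x | Vlim.W x ∉ C} = μ {y : RE (2*1+1) | y 2 ∉ C} := by
    rw [hμdef]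
    show Vlim.vol _ = (Vlim.P₁.prod (Vlim.P₁.prod Vlim.P₂)).map (sVec 1 f0 Vlim.W) _
    rw [Measure.map_apply (measurable_sVec (fun _ => measurable_const) Vlim.meas) hmble]
    rfl
  -- key claim: for every δ > 0, μ gives no mass to points whose last coordinate is
  -- at distance ≥ δ from C
  have key : ∀ δ : ℝ, 0 < δ → μ {y : RE (2*1+1) | δ ≤ Metric.infDist (y 2) C} = 0 := by
    intro δ hδ
    set Fδ : Set (RE (2*1+1)) := {y | δ ≤ Metric.infDist (y 2) C} with hFδ
    have hFδclosed : IsClosed Fδ := by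
      have hcont : Continuous fun y : RE (2*1+1) => Metric.infDist (y 2) C :=
        (Metric.continuous_infDist_pt C).comp (continuous_coord 2)
      exact isClosed_le continuous_const hcont
    have hbound : ∀ ε : ℝ, 0 < ε → ε < δ → μ Fδ ≤ ENNReal.ofReal ε := by
      intro ε hε hεδ
      obtain ⟨n, hn⟩ := (hconv.eventually
        (gt_mem_nhds (show (0:ℝ) < ε/2 by linarith))).exists
      -- the k = 1 Hausdorff distance is at most 2 * dM < ε
      have hsum : Summable (fun k : ℕ =>
          (2:ℝ)⁻¹ ^ (k+1) * dHLP ((V n).Sk (k+1)) (Vlim.Sk (k+1))) := by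
        refine Summable.of_nonneg_of_le
          (fun k => mul_nonneg (by positivity) (dHLP_nonneg _ _)) (fun k => ?_)
          ((summable_geometric_of_lt_one (r := (2:ℝ)⁻¹) (by norm_num) (by norm_num)).mul_left (2:ℝ)⁻¹)
        calc (2:ℝ)⁻¹ ^ (k+1) * dHLP ((V n).Sk (k+1)) (Vlim.Sk (k+1))
              ≤ (2:ℝ)⁻¹ ^ (k+1) * 1 :=
                mul_le_mul_of_nonneg_left (dHLP_Sk_le_one _ _ _) (by positivity)
            _ = (2:ℝ)⁻¹ * (2:ℝ)⁻¹ ^ k := by rw [mul_one, pow_succ']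
      have hterm := Summable.le_tsum hsum 0
        (fun j _ => mul_nonneg (by positivity) (dHLP_nonneg _ _))
      have hdH : dHLP ((V n).Sk 1) (Vlim.Sk 1) < ε := by
        have h1 : (2:ℝ)⁻¹ ^ (0+1) * dHLP ((V n).Sk (0+1)) (Vlim.Sk (0+1)) < ε/2 :=
          lt_of_le_of_lt hterm hn
        norm_num at h1
        linarith
      have hfin : eHausLP ((V n).Sk 1) (Vlim.Sk 1) ≠ ⊤ :=
        (lt_of_le_of_lt (eHausLP_Sk_le_one _ _ 1) (by norm_num)).ne
      have hlt : eHausLP ((V n).Sk 1) (Vlim.Sk 1) < ENNReal.ofReal ε := by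
        rw [← ENNReal.ofReal_toReal hfin]
        exact ENNReal.ofReal_lt_ofReal_iff_of_nonneg ENNReal.toReal_nonneg |>.mpr hdH
      have h2 : (⨅ ρ ∈ (V n).Sk 1, levyProkhorovEDist ρ μ) < ENNReal.ofReal ε := by
        refine lt_of_le_of_lt ?_ hlt
        refine le_trans (le_iSup₂ (f := fun (ν : Measure (RE (2*1+1)))
          (_ : ν ∈ Vlim.Sk 1) => ⨅ ρ ∈ (V n).Sk 1, levyProkhorovEDist ρ ν) μ hμmem) ?_
        exact le_max_right _ _
      rw [iInf_lt_iff] at h2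
      obtain ⟨ρ, h2⟩ := h2
      rw [iInf_lt_iff] at h2
      obtain ⟨hρmem, h2⟩ := h2
      obtain ⟨g, hgmeas, -, hρeq⟩ := hρmem
      haveI := (V n).prob₁; haveI := (V n).prob₂
      have hρzero : ρ {y : RE (2*1+1) | y 2 ∉ C} = 0 := by
        rw [hρeq]
        show ((V n).P₁.prod ((V n).P₁.prod (V n).P₂)).map (sVec 1 g (V n).W) _ = 0
        rw [Measure.map_apply (measurable_sVec hgmeas (V n).meas) hmble]
        refine measure_mono_null ?_ (hvals n)
        intro x hx
        simpa [sVec_last] using hx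
      have hineq := right_measure_le_of_levyProkhorovEDist_lt h2 hFδclosed.measurableSet
      have hthick : Metric.thickening (ENNReal.ofReal ε).toReal Fδ ⊆
          {y : RE (2*1+1) | y 2 ∉ C} := by
        rw [ENNReal.toReal_ofReal hε.le]
        intro y hy
        obtain ⟨z, hzF, hdist⟩ := Metric.mem_thickening_iff.mp hy
        have hzF' : δ ≤ Metric.infDist (z 2) C := hzF
        have hmono : Metric.infDist (z 2) C ≤ Metric.infDist (y 2) C + dist (z 2) (y 2) :=
          Metric.infDist_le_infDist_add_dist
        have hd : dist (z 2) (y 2) ≤ dist z y := coord_dist_le 2 z y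
        have hdyz : dist z y < ε := by rwa [dist_comm]
        intro hyC
        rw [Metric.infDist_zero_of_mem hyC] at hmono
        linarith
      calc μ Fδ ≤ ρ (Metric.thickening (ENNReal.ofReal ε).toReal Fδ) + ENNReal.ofReal ε :=
            hineq
        _ ≤ 0 + ENNReal.ofReal ε := by
            gcongr
            exact le_of_eq (measure_mono_null hthick hρzero)
        _ = ENNReal.ofReal ε := zero_add _
    have hbound' : ∀ ε : ℝ, 0 < ε → μ Fδ ≤ ENNReal.ofReal ε := by
      intro ε hε
      refine le_trans (hbound (min ε (δ/2)) (lt_min hε (by linarith))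
        (lt_of_le_of_lt (min_le_right _ _) (by linarith))) ?_
      exact ENNReal.ofReal_le_ofReal (min_le_left _ _)
    refine le_antisymm (ENNReal.le_of_forall_pos_le_add fun ε hε _ => ?_) (zero_le)
    rw [zero_add]
    simpa [ENNReal.ofReal_coe_nnreal] using hbound' ε (by exact_mod_cast hε)
  rw [hmap]
  have hunion : {y : RE (2*1+1) | y 2 ∉ C} =
      ⋃ m : ℕ, {y : RE (2*1+1) | 1/((m:ℝ)+1) ≤ Metric.infDist (y 2) C} := by
    ext y
    simp only [mem_setOf_eq, mem_iUnion]
    constructor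
    · intro hy
      have hpos : 0 < Metric.infDist (y 2) C := (hC.notMem_iff_infDist_pos hCne).1 hy
      obtain ⟨m, hm⟩ := exists_nat_one_div_lt hpos
      exact ⟨m, hm.le⟩
    · rintro ⟨m, hm⟩ hyC
      rw [Metric.infDist_zero_of_mem hyC] at hm
      have h0 : (0:ℝ) < 1/((m:ℝ)+1) := by positivity
      linarith
  rw [hunion]
  exact measure_iUnion_null fun m => key _ (by positivity)

end
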